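/- Let K be a field of characteristic ≠ 2, 3, s^2 = -3, b, c ∈ K^*, γ^3 = c. The maps φ and ψ (from the birational correspondence between K_6 : (x_1^3 - b)t^6 = c(x_0^3 - b) and E : y^2 = x^3 + ((t^6 - c)/(2b^2))^2) are mutually inverse on their domains of definition: ψ(φ(x_0, x_1, t)) = (x_0, x_1, t) whenever both sides are defined. -/

import Mathlib

/-- The maps `φ` and `ψ` of the birational correspondence between
`K₆ : (x₁³ - b)t⁶ = c(x₀³ - b)` and `E : y² = x³ + ((t⁶ - c)/(2b²))²` are mutually
inverse where defined: `ψ(φ(x₀, x₁, t)) = (x₀, x₁, t)`. -/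
theorem stmt_10 (K : Type*) [Field K] (h2 : (2 : K) ≠ 0) (h3 : (3 : K) ≠ 0)
    (s : K) (hs : s ^ 2 = -3) (b c γ : K) (hb : b ≠ 0) (hc : c ≠ 0) (hγ : γ ^ 3 = c)
    (x₀ x₁ t : K) (hsurf : (x₁ ^ 3 - b) * t ^ 6 = c * (x₀ ^ 3 - b))
    (hden : x₀ * γ - t ^ 2 * x₁ ≠ 0) (ht : t ≠ 0) (htc : t ^ 6 ≠ c)
    (x y : K) (hx : x = (t ^ 6 - c) / (b * (x₀ * γ - t ^ 2 * x₁)))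
    (hy : y = s * (x₀ * γ + t ^ 2 * x₁) / (-(2 * b)) * x) :
    (2 * b ^ 2 * y - s * (t ^ 6 - c)) / (-(2 * s * b * γ * x)) = x₀ ∧
      (2 * b ^ 2 * y + s * (t ^ 6 - c)) / (-(2 * s * b * t ^ 2 * x)) = x₁ := by
  have hs0 : s ≠ 0 := by
    intro h; rw [h] at hs; simp at hs
    exact h3 (by linear_combination hs)
  have hγ0 : γ ≠ 0 := by
    intro h; rw [h] at hγ; exact hc (by simpa using hγ.symm)
  have htc' : t ^ 6 - c ≠ 0 := sub_ne_zero.mpr htc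
  have hbd : b * (x₀ * γ - t ^ 2 * x₁) ≠ 0 := mul_ne_zero hb hden
  have hx0 : x ≠ 0 := by
    rw [hx]; exact div_ne_zero htc' hbd
  have hkey : t ^ 6 - c = x * (b * (x₀ * γ - t ^ 2 * x₁)) := by
    rw [hx]; field_simp
  subst hy
  constructor
  · rw [div_eq_iff (by simp [hs0, hb, hγ0, hx0, h2])]
    field_simp
    linear_combination (-1 : K) * hkey
  · rw [div_eq_iff (by simp [hs0, hb, ht, hx0, h2])]
    field_simp
    linear_combination hkey
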